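/- With the B^n_s recursion and {n} := n(c̃_{n-1} - w), one has B^n_{(2)} = {n+1}·∑_{l=1}^{n-1}{l} for all n ≥ 2, and B^1_{(2)} = 0, where (2) denotes the sequence (2,0,0,…). -/
import Mathlib


/-- `c̃_j = c̃_0 - j·A₁`. -/
noncomputable def ctilde (c0 A1 : ℝ) (j : ℕ) : ℝ := c0 - (j : ℝ) * A1

/-- total `|s| = ∑ s_i`. -/
def totdeg (s : ℕ →₀ ℕ) : ℕ := s.sum fun _ v => v

/-- weighted `[s] = ∑ s_i (i+1)`. -/
def wdeg (s : ℕ →₀ ℕ) : ℕ := s.sum fun i v => v * (i + 1)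

/-- `s - σ₀`: decrement `s₀` by one. -/
noncomputable def subσ₀ (s : ℕ →₀ ℕ) : ℕ →₀ ℕ := s.update 0 (s 0 - 1)

/-- `s - σᵢ` for `i ≥ 1`: increment `s_{i-1}`, decrement `s_i`. -/
noncomputable def subσ (s : ℕ →₀ ℕ) (i : ℕ) : ℕ →₀ ℕ :=
  (s.update (i - 1) (s (i - 1) + 1)).update i (s i - 1)

/-- The recursion defining the numbers `B^n_s` (7.7). -/
def BRec (c0 A1 w : ℝ) (B : ℕ → (ℕ →₀ ℕ) → ℝ) : Prop :=
  B 0 0 = 1 ∧ (∀ s : ℕ →₀ ℕ, s ≠ 0 → B 0 s = 0) ∧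
    ∀ n : ℕ, ∀ s : ℕ →₀ ℕ, 1 ≤ n →
      B n s =
        (if s 0 = 0 then 0 else
          ((n + totdeg s - 1 : ℕ) : ℝ) * (ctilde c0 A1 (n + totdeg s - 2) - w) *
            ∑ l ∈ Finset.range n, B l (subσ₀ s))
        + ∑ i ∈ s.support.filter (fun i => 1 ≤ i),
            ((s (i - 1) : ℝ) + 1) * ∑ l ∈ Finset.range n, B l (subσ s i)

lemma totdeg_single (k : ℕ) : totdeg (Finsupp.single 0 k) = k := by
  simp [totdeg, Finsupp.sum_single_index]

lemma subσ₀_single (k : ℕ) : subσ₀ (Finsupp.single 0 k) = Finsupp.single 0 (k-1) := by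
  ext i
  rcases eq_or_ne i 0 with rfl | h
  · simp [subσ₀]
  · simp [subσ₀, Finsupp.single_apply, Ne.symm h, Function.update_of_ne h]

lemma filter_single (k : ℕ) :
    ((Finsupp.single 0 k : ℕ →₀ ℕ).support.filter (fun i => 1 ≤ i)) = ∅ := by
  ext i
  simp [Finsupp.single_apply]
  omega

theorem stmt_9 (c0 A1 w : ℝ) (B : ℕ → (ℕ →₀ ℕ) → ℝ) (hB : BRec c0 A1 w B) :
    (∀ n : ℕ, 2 ≤ n →
      B n (Finsupp.single 0 2) =
        ((n : ℝ) + 1) * (ctilde c0 A1 n - w) *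
          ∑ l ∈ Finset.Icc 1 (n - 1), (l : ℝ) * (ctilde c0 A1 (l - 1) - w)) ∧
    B 1 (Finsupp.single 0 2) = 0 := by
  obtain ⟨h00, h0, hrec⟩ := hB
  -- B k 0 = 0 for k ≥ 1
  have hBz : ∀ k : ℕ, 1 ≤ k → B k 0 = 0 := by
    intro k hk
    rw [hrec k 0 hk]
    simp
  -- ∑_{k<l} B k 0 = 1 for l ≥ 1
  have hsum0 : ∀ l : ℕ, 1 ≤ l → ∑ k ∈ Finset.range l, B k 0 = 1 := by
    intro l hl
    induction l with
    | zero => omega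
    | succ m ih =>
      rcases Nat.eq_zero_or_pos m with rfl | hm
      · simpa using h00
      · rw [Finset.sum_range_succ, ih hm, hBz m hm]; ring
  -- B l (single 0 1) = l * (c̃_{l-1} - w) for l ≥ 1
  have hB1 : ∀ l : ℕ, 1 ≤ l →
      B l (Finsupp.single 0 1) = (l : ℝ) * (ctilde c0 A1 (l - 1) - w) := by
    intro l hl
    rw [hrec l _ hl]
    rw [subσ₀_single, filter_single]
    simp only [Finsupp.single_eq_same, totdeg_single]
    have h1 : l + 1 - 1 = l := by omega
    have h2 : l + 1 - 2 = l - 1 := by omega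
    rw [h1, h2]
    have : (Finsupp.single 0 (1 - 1) : ℕ →₀ ℕ) = 0 := by simp
    rw [this, hsum0 l hl]
    simp
  have hB10 : B 0 (Finsupp.single 0 1) = 0 := by
    apply h0
    simp [Finsupp.single_eq_zero]
  -- main computation for n ≥ 1
  have hmain : ∀ n : ℕ, 1 ≤ n →
      B n (Finsupp.single 0 2) =
        ((n : ℝ) + 1) * (ctilde c0 A1 n - w) *
          ∑ l ∈ Finset.Icc 1 (n - 1), (l : ℝ) * (ctilde c0 A1 (l - 1) - w) := by
    intro n hn
    rw [hrec n _ hn]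
    rw [subσ₀_single, filter_single]
    simp only [Finsupp.single_eq_same, totdeg_single]
    have h1 : n + 2 - 1 = n + 1 := by omega
    have h2 : n + 2 - 2 = n := by omega
    rw [h1, h2]
    have hset : Finset.range n = insert 0 (Finset.Icc 1 (n - 1)) := by
      ext i
      simp [Finset.mem_range, Finset.mem_Icc]
      omega
    have hnot : 0 ∉ Finset.Icc 1 (n - 1) := by simp
    rw [hset, Finset.sum_insert hnot]
    have : (2 : ℕ) - 1 = 1 := rfl
    rw [this, hB10]
    have hrw : ∑ l ∈ Finset.Icc 1 (n - 1), B l (Finsupp.single 0 1) =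
        ∑ l ∈ Finset.Icc 1 (n - 1), (l : ℝ) * (ctilde c0 A1 (l - 1) - w) := by
      apply Finset.sum_congr rfl
      intro l hl
      exact hB1 l (Finset.mem_Icc.mp hl).1
    rw [hrw]
    push_cast
    ring
  refine ⟨fun n hn => hmain n (by omega), ?_⟩
  have := hmain 1 le_rfl
  simpa using this
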